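/- (Correctness of Gaussian elimination to reduced row echelon form.) For every m×n matrix A over a field K there exist an invertible m×m matrix M over K, a natural number r ≤ min(m, n), and a strictly increasing function c : Fin r → Fin n such that the matrix R = M · A satisfies: for each i < r, R_{i, c_i} = 1, R_{k, c_i} = 0 for every k ≠ i, and R_{i, j} = 0 for all j < c_i; every row R_i with i ≥ r is identically zero; and r equals the rank of A. -/

import Mathlib

lemma ge_rref_rank {K : Type*} [Field K] {m n r : ℕ} (R : Matrix (Fin m) (Fin n) K) (hr : r ≤ m)
    (c : Fin r → Fin n)
    (hpiv : ∀ i : Fin r, ∀ k : Fin m, R k (c i) = if k = Fin.castLE hr i then 1 else 0)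
    (hzero : ∀ i : Fin m, r ≤ (i : ℕ) → R i = 0) : R.rank = r := by
  classical
  set f : Fin r → (Fin m → K) := fun i => Pi.single (Fin.castLE hr i) 1 with hf
  have hli : LinearIndependent K f := by
    have h1 := (Pi.basisFun K (Fin m)).linearIndependent
    have h2 := h1.comp (Fin.castLE hr) (Fin.castLE_injective hr)
    have : f = (Pi.basisFun K (Fin m)) ∘ (Fin.castLE hr) := by
      funext i; simp [hf]
    rwa [this]
  have hrange : LinearMap.range R.mulVecLin = Submodule.span K (Set.range f) := by
    apply le_antisymm
    · rintro v ⟨x, rfl⟩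
      have hv : R.mulVecLin x = ∑ k : Fin m, Pi.single k (R.mulVecLin x k) := by
        exact (Finset.univ_sum_single (R.mulVecLin x)).symm
      rw [hv]
      refine Submodule.sum_mem _ fun k _ => ?_
      by_cases hk : r ≤ (k : ℕ)
      · have : R.mulVecLin x k = 0 := by
          simp [Matrix.mulVecLin_apply, Matrix.mulVec, hzero k hk]
        rw [this, Pi.single_zero]
        exact Submodule.zero_mem _
      · push_neg at hk
        have : Pi.single k (R.mulVecLin x k) = (R.mulVecLin x k) • f ⟨k, hk⟩ := by
          ext k'
          simp only [hf, Pi.smul_apply, Pi.single_apply, Fin.castLE, smul_eq_mul]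
          split <;> simp
        rw [this]
        exact Submodule.smul_mem _ _ (Submodule.subset_span ⟨⟨k, hk⟩, rfl⟩)
    · rw [Submodule.span_le]
      rintro _ ⟨i, rfl⟩
      refine ⟨Pi.single (c i) 1, ?_⟩
      ext k
      simp [hf, Matrix.mulVecLin_apply, hpiv i k, Pi.single_apply, eq_comm]
  rw [Matrix.rank, hrange, finrank_span_eq_card hli, Fintype.card_fin]

lemma ge_isUnit_of_mul_eq_one {K : Type*} [Field K] {m : ℕ}
    (P Q : Matrix (Fin m) (Fin m) K) (h : P * Q = 1) : IsUnit P := by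
  have hd : IsUnit P.det := by
    have h2 := congrArg Matrix.det h
    rw [Matrix.det_mul, Matrix.det_one] at h2
    exact IsUnit.of_mul_eq_one _ h2
  exact (Matrix.isUnit_iff_isUnit_det P).mpr hd

lemma ge_perm_mul {K : Type*} [Field K] {m p : ℕ} (σ : Equiv.Perm (Fin m))
    (X : Matrix (Fin m) (Fin p) K) (k : Fin m) (j : Fin p) :
    ((Matrix.of fun k l => if σ k = l then (1 : K) else 0) * X) k j = X (σ k) j := by
  rw [Matrix.mul_apply]
  simp [ite_mul, Finset.sum_ite_eq]

lemma ge_rank1_mul {K : Type*} [Field K] {m p : ℕ} (u w : Fin m → K)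
    (X : Matrix (Fin m) (Fin p) K) (k : Fin m) (j : Fin p) :
    (((1 + Matrix.of fun k l => u k * w l : Matrix (Fin m) (Fin m) K)) * X) k j
      = X k j + u k * ∑ l, w l * X l j := by
  rw [Matrix.add_mul, Matrix.one_mul, Matrix.add_apply, Matrix.mul_apply]
  simp only [Matrix.of_apply]
  rw [Finset.mul_sum]
  congr 1
  exact Finset.sum_congr rfl fun l _ => mul_assoc _ _ _

lemma ge_rank1_isUnit {K : Type*} [Field K] {m : ℕ} (u w : Fin m → K)
    (h : ∑ t, w t * u t = 0) :
    IsUnit (1 + Matrix.of fun k l => u k * w l) := by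
  set E : Matrix (Fin m) (Fin m) K := Matrix.of fun k l => u k * w l with hE
  have hEE : E * E = 0 := by
    ext k l
    rw [Matrix.mul_apply]
    simp only [hE, Matrix.of_apply, Matrix.zero_apply]
    have : ∀ t, (u k * w t) * (u t * w l) = u k * ((w t * u t) * w l) := fun t => by ring
    rw [Finset.sum_congr rfl fun t _ => this t, ← Finset.mul_sum, ← Finset.sum_mul, h,
      zero_mul, mul_zero]
  refine ge_isUnit_of_mul_eq_one _ (1 - E) ?_
  have h2 : (1 + E) * (1 - E) = 1 - E * E := by noncomm_ring
  rw [h2, hEE, sub_zero]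

lemma ge_gauss_aux {K : Type*} [Field K] (n : ℕ) :
    ∀ (m : ℕ) (A : Matrix (Fin m) (Fin n) K),
    ∃ M : Matrix (Fin m) (Fin m) K, IsUnit M ∧
    ∃ (r : ℕ) (hrm : r ≤ m) (_hrn : r ≤ n) (c : Fin r → Fin n), StrictMono c ∧
      (∀ i : Fin r, ∀ k : Fin m, (M * A) k (c i) = if k = Fin.castLE hrm i then 1 else 0) ∧
      (∀ i : Fin r, ∀ j : Fin n, j < c i → (M * A) (Fin.castLE hrm i) j = 0) ∧
      (∀ i : Fin m, r ≤ (i : ℕ) → (M * A) i = 0) := by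
  induction n with
  | zero =>
    intro m A
    refine ⟨1, isUnit_one, 0, Nat.zero_le _, le_rfl, Fin.elim0, fun i => i.elim0, fun i => i.elim0,
      fun i => i.elim0, fun i _ => ?_⟩
    funext j; exact j.elim0
  | succ n ih =>
    intro m A
    match m with
    | 0 =>
      refine ⟨1, isUnit_one, 0, le_rfl, Nat.zero_le _, Fin.elim0, fun i => i.elim0,
        fun i => i.elim0, fun i => i.elim0, fun i _ => i.elim0⟩
    | m' + 1 =>
      by_cases hcol : ∀ i : Fin (m' + 1), A i 0 = 0
      · -- first column is zero
        obtain ⟨M, hM, r, hrm, hrn, c', hmono, hpiv, hlt, hzero⟩ :=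
          ih (m' + 1) (A.submatrix id Fin.succ)
        have hsub : ∀ k j, (M * A) k (Fin.succ j) = (M * A.submatrix id Fin.succ) k j := by
          intro k j; simp [Matrix.mul_apply]
        have hz : ∀ k, (M * A) k 0 = 0 := by
          intro k; simp [Matrix.mul_apply, hcol]
        refine ⟨M, hM, r, hrm, hrn.trans n.le_succ, fun i => (c' i).succ,
          fun a b hab => Fin.succ_lt_succ_iff.mpr (hmono hab), ?_, ?_, ?_⟩
        · intro i k; rw [hsub]; exact hpiv i k
        · intro i j hj
          rcases Fin.eq_zero_or_eq_succ j with rfl | ⟨j', rfl⟩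
          · exact hz _
          · rw [hsub]; exact hlt i j' (by simpa [Fin.succ_lt_succ_iff] using hj)
        · intro i hi
          funext j
          rcases Fin.eq_zero_or_eq_succ j with rfl | ⟨j', rfl⟩
          · exact hz _
          · rw [Pi.zero_apply, hsub]
            exact congrFun (hzero i hi) j'
      · -- first column nonzero
        push_neg at hcol
        obtain ⟨i₀, hi₀⟩ := hcol
        set σ := Equiv.swap (0 : Fin (m' + 1)) i₀ with hσdef
        set P : Matrix (Fin (m' + 1)) (Fin (m' + 1)) K :=
          Matrix.of fun k l => if σ k = l then (1 : K) else 0 with hPdef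
        have hPunit : IsUnit P := by
          refine ge_isUnit_of_mul_eq_one P P ?_
          ext k l
          rw [hPdef, ge_perm_mul σ _ k l, hσdef]
          simp [Matrix.one_apply, Equiv.swap_apply_self]
        set B₁ := P * A with hB₁def
        have hB₁ : ∀ k j, B₁ k j = A (σ k) j := fun k j => ge_perm_mul σ A k j
        have ha : B₁ 0 0 ≠ 0 := by
          rw [hB₁]
          simpa [hσdef, Equiv.swap_apply_left] using hi₀
        set d : Fin (m' + 1) → K := fun k => if k = 0 then (B₁ 0 0)⁻¹ else 1 with hddef
        set D := Matrix.diagonal d with hDdef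
        have hDunit : IsUnit D := by
          refine ge_isUnit_of_mul_eq_one D
            (Matrix.diagonal fun k => if k = 0 then B₁ 0 0 else 1) ?_
          rw [hDdef, Matrix.diagonal_mul_diagonal,
            show (fun i => d i * if i = 0 then B₁ 0 0 else 1) = fun _ => (1 : K) from
              funext fun k => by by_cases hk : k = 0 <;> simp [hddef, hk, inv_mul_cancel₀ ha],
            Matrix.diagonal_one]
        set B₂ := D * B₁ with hB₂def
        have hB₂ : ∀ k j, B₂ k j = d k * B₁ k j := by
          intro k j; rw [hB₂def, hDdef, Matrix.diagonal_mul]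
        have hB₂00 : B₂ 0 0 = 1 := by
          rw [hB₂]; simp [hddef, inv_mul_cancel₀ ha]
        set v : Fin (m' + 1) → K := fun k => if k = 0 then 0 else -(B₂ k 0) with hvdef
        set w₁ : Fin (m' + 1) → K := fun l => if l = 0 then 1 else 0 with hw₁def
        set L : Matrix (Fin (m' + 1)) (Fin (m' + 1)) K :=
          1 + Matrix.of fun k l => v k * w₁ l with hLdef
        have hLunit : IsUnit L := by
          refine ge_rank1_isUnit v w₁ ?_
          apply Finset.sum_eq_zero
          intro t _
          by_cases ht : t = 0 <;> simp [hvdef, hw₁def, ht]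
        set B₃ := L * B₂ with hB₃def
        have hB₃ : ∀ k j, B₃ k j = B₂ k j + v k * B₂ 0 j := by
          intro k j
          rw [hB₃def, hLdef, ge_rank1_mul]
          congr 1
          rw [show ∑ l, w₁ l * B₂ l j = B₂ 0 j from by
            simp [hw₁def, ite_mul, Finset.sum_ite_eq]]
        have hB₃col : ∀ k, B₃ k 0 = if k = 0 then 1 else 0 := by
          intro k
          rw [hB₃, hB₂00]
          by_cases hk : k = 0 <;> simp [hvdef, hk, hB₂00]
        set C := B₃.submatrix Fin.succ Fin.succ with hCdef
        obtain ⟨N, hN, r', hr'm, hr'n, c'', hmono, hpivC, hltC, hzeroC⟩ := ih m' C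
        obtain ⟨Nu, hNu⟩ := hN
        set M₂ : Matrix (Fin (m' + 1)) (Fin (m' + 1)) K :=
          Matrix.of (Fin.cons (Pi.single 0 1) fun k => Fin.cons 0 (N k)) with hM₂def
        have hM₂row0 : ∀ {p : ℕ} (X : Matrix (Fin (m' + 1)) (Fin p) K) (j : Fin p),
            (M₂ * X) 0 j = X 0 j := by
          intro p X j
          rw [Matrix.mul_apply]
          simp [hM₂def, Pi.single_apply, ite_mul, Finset.sum_ite_eq]
        have hM₂rowsucc : ∀ {p : ℕ} (X : Matrix (Fin (m' + 1)) (Fin p) K) (k : Fin m') (j : Fin p),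
            (M₂ * X) k.succ j = ∑ t : Fin m', N k t * X t.succ j := by
          intro p X k j
          rw [Matrix.mul_apply, Fin.sum_univ_succ]
          simp [hM₂def]
        set N' : Matrix (Fin m') (Fin m') K := ↑Nu⁻¹ with hN'def
        have hNN' : N * N' = 1 := by rw [hN'def, ← hNu]; exact Nu.mul_inv
        have hM₂unit : IsUnit M₂ := by
          refine ge_isUnit_of_mul_eq_one M₂
            (Matrix.of (Fin.cons (Pi.single 0 1) fun k => Fin.cons 0 (N' k))) ?_
          ext k l
          rcases Fin.eq_zero_or_eq_succ k with rfl | ⟨k', rfl⟩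
          · rw [hM₂row0]
            simp [Matrix.one_apply, Pi.single_apply, eq_comm]
          · rw [hM₂rowsucc]
            rcases Fin.eq_zero_or_eq_succ l with rfl | ⟨l', rfl⟩
            · simp [Matrix.one_apply, Fin.succ_ne_zero]
            · have : ∀ t : Fin m',
                  (Matrix.of (Fin.cons (Pi.single (0 : Fin (m'+1)) (1:K))
                    fun k => Fin.cons 0 (N' k)) : Matrix _ _ K) t.succ l'.succ = N' t l' := by
                intro t; simp
              rw [Finset.sum_congr rfl fun t _ => by rw [this t]]
              have := congrFun (congrFun hNN' k') l'
              rw [Matrix.mul_apply] at this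
              rw [this]
              simp [Matrix.one_apply, Fin.succ_inj]
        set X := M₂ * B₃ with hXdef
        have hX0 : ∀ j, X 0 j = B₃ 0 j := fun j => hM₂row0 B₃ j
        have hXsucc : ∀ (k : Fin m') (j : Fin n), X k.succ j.succ = (N * C) k j := by
          intro k j
          rw [hXdef, hM₂rowsucc, Matrix.mul_apply]
          rfl
        have hXcol0 : ∀ k, X k 0 = if k = 0 then 1 else 0 := by
          intro k
          rcases Fin.eq_zero_or_eq_succ k with rfl | ⟨k', rfl⟩
          · rw [hX0, hB₃col]
          · rw [hXdef, hM₂rowsucc]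
            rw [Finset.sum_congr rfl fun t _ => by
              rw [hB₃col t.succ, if_neg (Fin.succ_ne_zero t), mul_zero]]
            simp [Fin.succ_ne_zero]
        set g : Fin m' → K :=
          fun i => if h : (i : ℕ) < r' then -(X 0 ((c'' ⟨i, h⟩).succ)) else 0 with hgdef
        set u₁ : Fin (m' + 1) → K := fun k => if k = 0 then 1 else 0 with hu₁def
        set w₂ : Fin (m' + 1) → K := Fin.cons 0 g with hw₂def
        set M₃ : Matrix (Fin (m' + 1)) (Fin (m' + 1)) K :=
          1 + Matrix.of fun k l => u₁ k * w₂ l with hM₃def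
        have hM₃unit : IsUnit M₃ := by
          refine ge_rank1_isUnit u₁ w₂ ?_
          simp only [hu₁def, mul_ite, mul_one, mul_zero, Finset.sum_ite_eq',
            Finset.mem_univ, if_true]
          rw [hw₂def]; simp
        set R := M₃ * X with hRdef
        have hRsucc : ∀ (k : Fin m') (j : Fin (n + 1)), R k.succ j = X k.succ j := by
          intro k j
          rw [hRdef, hM₃def, ge_rank1_mul]
          simp [hu₁def, Fin.succ_ne_zero]
        have hR0 : ∀ j, R 0 j = X 0 j + ∑ i : Fin m', g i * X i.succ j := by
          intro j
          rw [hRdef, hM₃def, ge_rank1_mul]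
          simp only [hu₁def, if_pos rfl, one_mul]
          congr 1
          rw [Fin.sum_univ_succ]
          simp [hw₂def]
        set M := M₃ * (M₂ * (L * (D * P))) with hMdef
        have hMunit : IsUnit M := hM₃unit.mul (hM₂unit.mul (hLunit.mul (hDunit.mul hPunit)))
        have hMA : M * A = R := by
          rw [hRdef, hXdef, hB₃def, hB₂def, hB₁def, hMdef]
          simp only [Matrix.mul_assoc]
        refine ⟨M, hMunit, r' + 1, by omega, by omega,
          Fin.cons 0 fun i => (c'' i).succ, ?_, ?_, ?_, ?_⟩
        · -- strict mono
          intro a b hab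
          rcases Fin.eq_zero_or_eq_succ a with rfl | ⟨a', rfl⟩
          · rcases Fin.eq_zero_or_eq_succ b with rfl | ⟨b', rfl⟩
            · exact absurd hab (lt_irrefl _)
            · simp only [Fin.cons_zero, Fin.cons_succ]
              exact Fin.succ_pos _
          · rcases Fin.eq_zero_or_eq_succ b with rfl | ⟨b', rfl⟩
            · exact absurd hab (by simp [Fin.lt_iff_val_lt_val])
            · simp only [Fin.cons_succ]
              exact Fin.succ_lt_succ_iff.mpr (hmono (Fin.succ_lt_succ_iff.mp hab))
        · -- pivots
          intro i k
          rw [hMA]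
          rcases Fin.eq_zero_or_eq_succ i with rfl | ⟨t, rfl⟩
          · simp only [Fin.cons_zero]
            have hc0 : Fin.castLE (show r' + 1 ≤ m' + 1 by omega) (0 : Fin (r' + 1)) = 0 := rfl
            rw [hc0]
            rcases Fin.eq_zero_or_eq_succ k with rfl | ⟨k', rfl⟩
            · rw [hR0]
              rw [Finset.sum_congr rfl fun t _ => by
                rw [hXcol0 t.succ, if_neg (Fin.succ_ne_zero t), mul_zero]]
              rw [hXcol0 0]
              simp
            · rw [hRsucc, hXcol0]
          · simp only [Fin.cons_succ]
            have hcast : Fin.castLE (show r' + 1 ≤ m' + 1 by omega) t.succ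
                = (Fin.castLE hr'm t).succ := rfl
            rw [hcast]
            rcases Fin.eq_zero_or_eq_succ k with rfl | ⟨k', rfl⟩
            · rw [hR0]
              have hgval : ∀ i : Fin m', g i * X i.succ ((c'' t).succ)
                  = if i = Fin.castLE hr'm t then g i else 0 := by
                intro i
                rw [hXsucc, hpivC t i, mul_ite, mul_one, mul_zero]
              rw [Finset.sum_congr rfl fun i _ => hgval i, Finset.sum_ite_eq',
                if_pos (Finset.mem_univ _)]
              have hgv : g (Fin.castLE hr'm t) = -(X 0 ((c'' t).succ)) := by
                rw [hgdef]
                simp only [Fin.coe_castLE]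
                rw [dif_pos t.isLt]
              rw [hgv]
              simp [(Fin.succ_ne_zero (Fin.castLE hr'm t)).symm]
            · rw [hRsucc, hXsucc, hpivC t k']
              simp [Fin.succ_inj]
        · -- left of pivot zeros
          intro i j hj
          rw [hMA]
          rcases Fin.eq_zero_or_eq_succ i with rfl | ⟨t, rfl⟩
          · simp only [Fin.cons_zero] at hj
            exact absurd hj (Fin.not_lt_zero j)
          · simp only [Fin.cons_succ] at hj
            have hcast : Fin.castLE (show r' + 1 ≤ m' + 1 by omega) t.succ
                = (Fin.castLE hr'm t).succ := rfl
            rw [hcast, hRsucc]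
            rcases Fin.eq_zero_or_eq_succ j with rfl | ⟨j', rfl⟩
            · rw [hXcol0]; simp [Fin.succ_ne_zero]
            · rw [hXsucc]
              exact hltC t j' (Fin.succ_lt_succ_iff.mp hj)
        · -- zero rows
          intro i hi
          rw [hMA]
          rcases Fin.eq_zero_or_eq_succ i with rfl | ⟨k, rfl⟩
          · simp at hi
          · have hk : r' ≤ (k : ℕ) := by
              rw [Fin.val_succ] at hi; omega
            funext j
            rw [Pi.zero_apply, hRsucc]
            rcases Fin.eq_zero_or_eq_succ j with rfl | ⟨j', rfl⟩
            · rw [hXcol0]; simp [Fin.succ_ne_zero]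
            · rw [hXsucc]
              exact congrFun (hzeroC k hk) j'

/-- **Correctness of Gaussian elimination to reduced row echelon form.** For every
matrix `A` over a field there is an invertible matrix `M` such that `M * A` is in
reduced row echelon form with `r = rank A` pivots in strictly increasing columns. -/
theorem gaussian_elimination_rref (K : Type*) [Field K] (m n : ℕ)
    (A : Matrix (Fin m) (Fin n) K) :
    ∃ (M : Matrix (Fin m) (Fin m) K), IsUnit M ∧
      ∃ (r : ℕ) (hr : r ≤ min m n) (c : Fin r → Fin n), StrictMono c ∧
        (∀ i : Fin r,
          (M * A) (Fin.castLE (hr.trans (min_le_left m n)) i) (c i) = 1 ∧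
          (∀ k : Fin m, k ≠ Fin.castLE (hr.trans (min_le_left m n)) i →
            (M * A) k (c i) = 0) ∧
          (∀ j : Fin n, j < c i →
            (M * A) (Fin.castLE (hr.trans (min_le_left m n)) i) j = 0)) ∧
        (∀ i : Fin m, r ≤ (i : ℕ) → (M * A) i = 0) ∧
        A.rank = r := by
  obtain ⟨M, hM, r, hrm, hrn, c, hmono, hpiv, hlt, hzero⟩ := ge_gauss_aux n m A
  have hr : r ≤ min m n := le_min hrm hrn
  refine ⟨M, hM, r, hr, c, hmono, ?_, hzero, ?_⟩
  · intro i
    have hcast : Fin.castLE (hr.trans (min_le_left m n)) i = Fin.castLE hrm i :=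
      Fin.ext rfl
    refine ⟨?_, ?_, ?_⟩
    · rw [hcast, hpiv i, if_pos rfl]
    · intro k hk
      rw [hcast] at hk
      rw [hpiv i, if_neg hk]
    · intro j hj
      rw [hcast]
      exact hlt i j hj
  · rw [← Matrix.rank_mul_eq_right_of_isUnit_det M A ((Matrix.isUnit_iff_isUnit_det M).mp hM)]
    exact ge_rref_rank (M * A) hrm c hpiv hzero
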